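/- For every integer k ≥ 7, in every proper k-edge-coloring of the graph G'_k(p,q), the edges pp' and qq' receive the same color. -/

import Mathlib

open SimpleGraph

/-- The vertices of the edge gadget `G'_k(p,q)`: the two parts `P` and `Q` of a complete
bipartite graph `K_{k-1,k-1}`, and the four vertices `p, p', q, q'`. -/
inductive EGVert (k : ℕ) where
  | p : EGVert k
  | p' : EGVert k
  | q : EGVert k
  | q' : EGVert k
  | P : Fin (k - 1) → EGVert k
  | Q : Fin (k - 1) → EGVert k
deriving DecidableEq

/-- The edge gadget `G'_k(p,q)`: a complete bipartite graph with parts `P` and `Q`,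
with `p'` complete to `P`, `q'` complete to `Q`, and the extra edges `pp'` and `qq'`. -/
def EG (k : ℕ) : SimpleGraph (EGVert k) :=
  SimpleGraph.fromRel (fun a b =>
    (∃ i j, a = EGVert.P i ∧ b = EGVert.Q j) ∨
    (∃ i, a = EGVert.p' ∧ b = EGVert.P i) ∨
    (∃ i, a = EGVert.q' ∧ b = EGVert.Q i) ∨
    (a = EGVert.p ∧ b = EGVert.p') ∨
    (a = EGVert.q ∧ b = EGVert.q'))

theorem EG_adj_pp' (k : ℕ) : (EG k).Adj EGVert.p EGVert.p' := by
  rw [EG, SimpleGraph.fromRel_adj]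
  exact ⟨fun h => (by cases h), Or.inl (by tauto)⟩

theorem EG_adj_qq' (k : ℕ) : (EG k).Adj EGVert.q EGVert.q' := by
  rw [EG, SimpleGraph.fromRel_adj]
  exact ⟨fun h => (by cases h), Or.inl (by tauto)⟩

/-- The edge `pp'` of the edge gadget, as a vertex of its line graph. -/
def edgePP (k : ℕ) : (EG k).edgeSet := ⟨s(EGVert.p, EGVert.p'), EG_adj_pp' k⟩

/-- The edge `qq'` of the edge gadget, as a vertex of its line graph. -/
def edgeQQ (k : ℕ) : (EG k).edgeSet := ⟨s(EGVert.q, EGVert.q'), EG_adj_qq' k⟩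

namespace EGaux

lemma adjPQ {k : ℕ} (i j : Fin (k-1)) : (EG k).Adj (EGVert.P i) (EGVert.Q j) := by
  rw [EG, SimpleGraph.fromRel_adj]
  exact ⟨fun h => (by cases h), Or.inl (Or.inl ⟨i, j, rfl, rfl⟩)⟩

lemma adjP' {k : ℕ} (i : Fin (k-1)) : (EG k).Adj EGVert.p' (EGVert.P i) := by
  rw [EG, SimpleGraph.fromRel_adj]
  exact ⟨fun h => (by cases h), Or.inl (Or.inr (Or.inl ⟨i, rfl, rfl⟩))⟩

lemma adjQ' {k : ℕ} (j : Fin (k-1)) : (EG k).Adj EGVert.q' (EGVert.Q j) := by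
  rw [EG, SimpleGraph.fromRel_adj]
  exact ⟨fun h => (by cases h), Or.inl (Or.inr (Or.inr (Or.inl ⟨j, rfl, rfl⟩)))⟩

/-- Edge `p'P_i` as an element of the edge set. -/
def eP' (k : ℕ) (i : Fin (k-1)) : (EG k).edgeSet := ⟨s(EGVert.p', EGVert.P i), adjP' i⟩

/-- Edge `q'Q_j` as an element of the edge set. -/
def eQ' (k : ℕ) (j : Fin (k-1)) : (EG k).edgeSet := ⟨s(EGVert.q', EGVert.Q j), adjQ' j⟩

/-- Edge `P_iQ_j` as an element of the edge set. -/
def eB (k : ℕ) (i j : Fin (k-1)) : (EG k).edgeSet := ⟨s(EGVert.P i, EGVert.Q j), adjPQ i j⟩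

/-- Surjectivity from injectivity & cardinality. -/
lemma surj {γ : Type*} [Fintype γ] {k : ℕ} (f : γ → ℕ) (hcard : Fintype.card γ = k)
    (hinj : Function.Injective f) (hmem : ∀ x, f x ∈ Finset.Icc 1 k) :
    ∀ y ∈ Finset.Icc 1 k, ∃ x, f x = y := by
  intro y hy
  have himg : Finset.image f Finset.univ = Finset.Icc 1 k := by
    apply Finset.eq_of_subset_of_card_le
    · intro z hz
      simp only [Finset.mem_image, Finset.mem_univ, true_and] at hz
      obtain ⟨x, rfl⟩ := hz; exact hmem x
    · rw [Finset.card_image_of_injective _ hinj, Finset.card_univ, hcard, Nat.card_Icc]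
      omega
  rw [← himg] at hy
  simpa using hy

end EGaux

open EGaux

theorem statement11 (k : ℕ) (hk : 7 ≤ k) (c : (EG k).edgeSet → ℕ)
    (hrange : ∀ e, c e ∈ Finset.Icc 1 k)
    (hproper : ∀ e f : (EG k).edgeSet, ((EG k).lineGraph).Adj e f → c e ≠ c f) :
    c (edgePP k) = c (edgeQQ k) := by
  by_contra hne
  set α := c (edgePP k) with hα
  set β := c (edgeQQ k) with hβ
  -- basic tool: edges sharing a vertex get distinct colors
  have cne : ∀ (e f : (EG k).edgeSet) (v : EGVert k), (e : Sym2 (EGVert k)) ≠ (f : Sym2 (EGVert k)) →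
      v ∈ (e : Sym2 (EGVert k)) → v ∈ (f : Sym2 (EGVert k)) → c e ≠ c f := by
    intro e f v hef hv1 hv2
    exact hproper e f (SimpleGraph.lineGraph_adj_iff_exists.mpr
      ⟨fun h => hef (by rw [h]), v, hv1, hv2⟩)
  have hcardO : Fintype.card (Option (Fin (k-1))) = k := by
    simp [Fintype.card_option]; omega
  -- colors at p' : edges pp', p'P_i
  have hP'ne : ∀ i, c (eP' k i) ≠ α := by
    intro i
    refine (cne (eP' k i) (edgePP k) EGVert.p' ?_ ?_ ?_)
    · simp [eP', edgePP, Sym2.eq_iff]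
    · simp [eP']
    · simp [edgePP]
  -- at each P i, all colors appear; get a bipartite edge of color α
  have hPi : ∀ i, ∃ j, c (eB k i j) = α := by
    intro i
    have hFinj : Function.Injective (fun o : Option (Fin (k-1)) =>
        Option.elim o (c (eP' k i)) (fun j => c (eB k i j))) := by
      intro a b hab
      match a, b with
      | none, none => rfl
      | none, some j =>
        exact absurd hab (cne (eP' k i) (eB k i j) (EGVert.P i)
          (by simp [eP', eB, Sym2.eq_iff]) (by simp [eP']) (by simp [eB]))
      | some j, none =>
        exact absurd hab (cne (eB k i j) (eP' k i) (EGVert.P i)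
          (by simp [eP', eB, Sym2.eq_iff]) (by simp [eB]) (by simp [eP']))
      | some j, some j' =>
        by_cases hjj : j = j'
        · rw [hjj]
        · exact absurd hab (cne (eB k i j) (eB k i j') (EGVert.P i)
            (by simp [eB, Sym2.eq_iff]; tauto) (by simp [eB]) (by simp [eB]))
    obtain ⟨x, hx⟩ := surj _ hcardO hFinj
      (by rintro (_|j) <;> simp [hrange]) α (hrange _)
    match x with
    | none => exact absurd hx (hP'ne i)
    | some j => exact ⟨j, hx⟩
  choose J hJ using hPi
  -- J is injective
  have hJinj : Function.Injective J := by
    intro i₁ i₂ h12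
    by_contra hii
    have := cne (eB k i₁ (J i₁)) (eB k i₂ (J i₂)) (EGVert.Q (J i₁))
      (by simp [eB, Sym2.eq_iff]; tauto) (by simp [eB]) (by rw [h12]; simp [eB])
    rw [hJ i₁, hJ i₂] at this
    exact this rfl
  -- at q', some edge q'Q_{j0} has color α
  have hQ'inj : Function.Injective (fun o : Option (Fin (k-1)) =>
      Option.elim o β (fun j => c (eQ' k j))) := by
    intro a b hab
    match a, b with
    | none, none => rfl
    | none, some j =>
      exact absurd hab.symm (cne (eQ' k j) (edgeQQ k) EGVert.q'
        (by simp [eQ', edgeQQ, Sym2.eq_iff]) (by simp [eQ']) (by simp [edgeQQ]))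
    | some j, none =>
      exact absurd hab (cne (eQ' k j) (edgeQQ k) EGVert.q'
        (by simp [eQ', edgeQQ, Sym2.eq_iff]) (by simp [eQ']) (by simp [edgeQQ]))
    | some j, some j' =>
      by_cases hjj : j = j'
      · rw [hjj]
      · exact absurd hab (cne (eQ' k j) (eQ' k j') EGVert.q'
          (by simp [eQ', Sym2.eq_iff]; tauto) (by simp [eQ']) (by simp [eQ']))
  obtain ⟨x, hx⟩ := surj _ hcardO hQ'inj (by rintro (_|j) <;> simp [hrange, hβ]) α (hrange _)
  have hj₀ : ∃ j₀, c (eQ' k j₀) = α := by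
    match x with
    | none => exact absurd hx.symm hne
    | some j => exact ⟨j, hx⟩
  obtain ⟨j₀, hj₀⟩ := hj₀
  -- J avoids j₀
  have hJne : ∀ i, J i ≠ j₀ := by
    intro i hi
    have := cne (eB k i (J i)) (eQ' k j₀) (EGVert.Q j₀)
      (by simp [eB, eQ', Sym2.eq_iff]) (by rw [hi]; simp [eB]) (by simp [eQ'])
    rw [hJ i, hj₀] at this
    exact this rfl
  -- cardinality contradiction
  have hle : Fintype.card (Fin (k-1)) ≤ (Finset.univ.erase j₀).card := by
    rw [← Finset.card_univ]
    apply Finset.card_le_card_of_injOn J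
    · intro i _
      exact Finset.mem_erase.mpr ⟨hJne i, Finset.mem_univ _⟩
    · exact hJinj.injOn
  rw [Finset.card_erase_of_mem (Finset.mem_univ _), Fintype.card_fin, Finset.card_univ,
    Fintype.card_fin] at hle
  omega
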